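/- Let X ~ Logistic(μ_X, σ) and Y ~ Logistic(μ_Y, σ) be logistic random variables with common scale σ > 0 and μ_X < μ_Y. Then the residual life quantile functions, given by F_t^{-1}(p) = σ log[(p + e^{(t-μ_X)/σ})/(1-p)] + μ_X - t and G_t^{-1}(p) = σ log[(p + e^{(t-μ_Y)/σ})/(1-p)] + μ_Y - t, satisfy F_t^{-1}(p) ≤ G_t^{-1}(p) for all p ∈ (0,1) and all t ∈ ℝ; in particular X ≤_{hr} Y and hence X ≤_{p_0-tvar-rl} Y for every p_0 ∈ (0,1). Moreover, if instead μ_X = μ_Y = μ and 0 < σ_X ≤ σ_Y (X ~ Logistic(μ, σ_X), Y ~ Logistic(μ, σ_Y)), then for every t ≥ μ and every p ∈ (0,1), F_t^{-1}(p) ≤ G_t^{-1}(p). -/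

import Mathlib

open MeasureTheory ProbabilityTheory

/-- The quantile (Value at Risk) of a distribution function `F` at level `p`:
`F^{-1}(p) = inf {x : F x ≥ p}`. -/
noncomputable def quantile (F : ℝ → ℝ) (p : ℝ) : ℝ := sInf {x : ℝ | p ≤ F x}

/-- The distribution function of the residual life `X_t = [X - t ∣ X > t]`:
`F_t(x) = (F(x+t) - F(t))/(1 - F(t))` for `x ≥ 0`, and `0` otherwise. -/
noncomputable def resCDF (F : ℝ → ℝ) (t : ℝ) (x : ℝ) : ℝ :=
  if 0 ≤ x then (F (x + t) - F t) / (1 - F t) else 0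

/-- The quantile function of the residual life `X_t`. -/
noncomputable def resQuantile (F : ℝ → ℝ) (t : ℝ) (p : ℝ) : ℝ :=
  quantile (resCDF F t) p

/-- `X ≤_{p₀-tvar-rl} Y`, expressed through the distribution functions `F` of `X` and `G` of `Y`:
`∫_p^1 F_t^{-1}(u) du ≤ ∫_p^1 G_t^{-1}(u) du` for all `p ∈ [p₀, 1)` and all `t` below the right
endpoints of the supports of `X` and `Y` (equivalently, `F t < 1` and `G t < 1`). -/
def TvarRlLE (F G : ℝ → ℝ) (p₀ : ℝ) : Prop :=
  ∀ t : ℝ, F t < 1 → G t < 1 → ∀ p ∈ Set.Ico p₀ 1,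
    (∫ u in p..1, resQuantile F t u) ≤ ∫ u in p..1, resQuantile G t u

/-- The distribution function of a logistic random variable `X ~ Logistic(μ, σ)`:
the survival function is `1/(1 + exp((x-μ)/σ))`. -/
noncomputable def logisticCDF (μ σ : ℝ) (x : ℝ) : ℝ := 1 - 1 / (1 + Real.exp ((x - μ) / σ))

section Aux

open Set

lemma log_bnd_aux {x : ℝ} (hx : 0 < x) (hx1 : x ≤ 1) :
    ‖Real.log x‖ ≤ ‖2 * x ^ (-(1/2) : ℝ)‖ := by
  have hs : 0 < Real.sqrt x := Real.sqrt_pos.2 hx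
  have h1 : Real.log (1 / Real.sqrt x) ≤ 1 / Real.sqrt x - 1 :=
    Real.log_le_sub_one_of_pos (by positivity)
  have h2 : Real.log (1 / Real.sqrt x) = - (Real.log x / 2) := by
    rw [Real.log_div one_ne_zero hs.ne', Real.log_one, Real.log_sqrt hx.le]; ring
  have hlx : Real.log x ≤ 0 := Real.log_nonpos hx.le hx1
  have hrpow : x ^ (-(1/2) : ℝ) = 1 / Real.sqrt x := by
    rw [Real.rpow_neg hx.le, ← Real.sqrt_eq_rpow, one_div]
  have hnn : (0:ℝ) ≤ 2 * x ^ (-(1/2) : ℝ) := by positivity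
  rw [Real.norm_eq_abs, Real.norm_eq_abs, abs_of_nonpos hlx, abs_of_nonneg hnn, hrpow]
  nlinarith [h1, h2, hs]

lemma II_log_aux {b : ℝ} (hb : 0 ≤ b) (hb1 : b ≤ 1) :
    IntervalIntegrable Real.log volume 0 b := by
  rw [intervalIntegrable_iff_integrableOn_Ioc_of_le hb]
  have hdom : IntegrableOn (fun x : ℝ => 2 * x ^ (-(1/2) : ℝ)) (Ioc 0 b) volume := by
    have := (intervalIntegral.intervalIntegrable_rpow' (a := 0) (b := b) (r := -(1/2))
      (by norm_num)).const_mul 2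
    rwa [intervalIntegrable_iff_integrableOn_Ioc_of_le hb] at this
  refine hdom.integrable.mono (Real.measurable_log.aestronglyMeasurable.restrict) ?_
  rw [ae_restrict_iff' measurableSet_Ioc]
  filter_upwards with x hx
  exact log_bnd_aux hx.1 (hx.2.trans hb1)

lemma II_log_one_sub_aux {p : ℝ} (hp : 0 ≤ p) (hp1 : p ≤ 1) :
    IntervalIntegrable (fun u : ℝ => Real.log (1 - u)) volume p 1 := by
  have := (II_log_aux (b := 1 - p) (by linarith) (by linarith)).comp_sub_left 1
  simpa using this.symm

/-- The explicit formula for the residual-life quantile of a logistic distribution. -/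
lemma resQ_logistic {μ σ t p : ℝ} (hσ : 0 < σ) (hp0 : 0 < p) (hp1 : p < 1) :
    resQuantile (logisticCDF μ σ) t p
      = σ * Real.log ((p + Real.exp ((t - μ) / σ)) / (1 - p)) + μ - t := by
  set a := Real.exp ((t - μ) / σ) with ha_def
  have ha : 0 < a := Real.exp_pos _
  have h1p : 0 < 1 - p := by linarith
  set c : ℝ := σ * Real.log ((p + a) / (1 - p)) + μ - t with hc_def
  have key : {x : ℝ | p ≤ resCDF (logisticCDF μ σ) t x} = Ici c := by
    ext x
    simp only [mem_setOf_eq, mem_Ici]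
    have hE : 0 < Real.exp (x / σ) := Real.exp_pos _
    have hfrac : 0 < (p + a) / (1 - p) := by positivity
    have hiff2 : c ≤ x ↔ p + a ≤ (1 - p) * (a * Real.exp (x / σ)) := by
      rw [hc_def]
      constructor
      · intro h
        have h' : Real.log ((p + a) / (1 - p)) ≤ (x + t - μ) / σ := by
          rw [le_div_iff₀ hσ] at *; linarith
        have := (Real.log_le_iff_le_exp hfrac).1 h'
        have hexp : Real.exp ((x + t - μ) / σ) = a * Real.exp (x / σ) := by
          rw [ha_def, ← Real.exp_add]; congr 1; field_simp; ring
        rw [hexp, div_le_iff₀ h1p] at this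
        linarith [this]
      · intro h
        have h2 : (p + a) / (1 - p) ≤ a * Real.exp (x / σ) := by
          rw [div_le_iff₀ h1p]; linarith
        have h3 : Real.log ((p + a) / (1 - p)) ≤ Real.log (a * Real.exp (x / σ)) :=
          Real.log_le_log hfrac h2
        have h4 : Real.log (a * Real.exp (x / σ)) = (t - μ) / σ + x / σ := by
          rw [Real.log_mul ha.ne' hE.ne', ha_def, Real.log_exp, Real.log_exp]
        have h5 : σ * Real.log ((p + a) / (1 - p)) ≤ σ * ((t - μ) / σ + x / σ) := by
          apply mul_le_mul_of_nonneg_left _ hσ.le; rw [h4] at h3; exact h3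
        have h6 : σ * ((t - μ) / σ + x / σ) = (t - μ) + x := by field_simp
        linarith [h5, h6 ▸ h5]
    rw [hiff2]
    by_cases hx : 0 ≤ x
    · have hexp2 : Real.exp ((x + t - μ) / σ) = a * Real.exp (x / σ) := by
        rw [ha_def, ← Real.exp_add]; congr 1; field_simp; ring
      have hD1 : (0:ℝ) < 1 + a := by linarith
      have hD2 : (0:ℝ) < 1 + a * Real.exp (x / σ) := by positivity
      have hres : resCDF (logisticCDF μ σ) t x
          = 1 - (1 + a) / (1 + a * Real.exp (x / σ)) := by
        simp only [resCDF, if_pos hx, logisticCDF]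
        rw [show x + t - μ = (x + t) - μ from rfl] at hexp2
        rw [hexp2]
        field_simp
        ring
      rw [hres]
      constructor
      · intro h
        have h' : (1 + a) / (1 + a * Real.exp (x / σ)) ≤ 1 - p := by linarith
        rw [div_le_iff₀ hD2] at h'
        nlinarith
      · intro h
        have h' : (1 + a) ≤ (1 - p) * (1 + a * Real.exp (x / σ)) := by nlinarith
        have := (div_le_iff₀ hD2).2 h'
        linarith
    · push_neg at hx
      have hres : resCDF (logisticCDF μ σ) t x = 0 := by simp [resCDF, not_le.2 hx]
      rw [hres]
      constructor
      · intro h; linarith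
      · intro h
        have : Real.exp (x / σ) < 1 := by
          rw [Real.exp_lt_one_iff]; exact div_neg_of_neg_of_pos hx hσ
        nlinarith [mul_pos (mul_pos h1p ha) (sub_pos.2 this), ha, hp0, h1p]
  rw [resQuantile, quantile, key, csInf_Ici]

lemma hr_pt {μX μY σ t p : ℝ} (hσ : 0 < σ) (hμ : μX < μY) (hp0 : 0 < p) (hp1 : p < 1) :
    σ * Real.log ((p + Real.exp ((t - μX) / σ)) / (1 - p)) + μX - t
      ≤ σ * Real.log ((p + Real.exp ((t - μY) / σ)) / (1 - p)) + μY - t := by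
  set aX := Real.exp ((t - μX) / σ) with haX
  set aY := Real.exp ((t - μY) / σ) with haY
  have haXp : 0 < aX := Real.exp_pos _
  have haYp : 0 < aY := Real.exp_pos _
  have h1p : 0 < 1 - p := by linarith
  have haYX : aY ≤ aX := by
    apply Real.exp_le_exp.2
    gcongr
  have hmul : (p + aX) * aY ≤ (p + aY) * aX := by nlinarith
  have hlog : Real.log ((p + aX) * aY) ≤ Real.log ((p + aY) * aX) :=
    Real.log_le_log (by positivity) hmul
  rw [Real.log_mul (by positivity) haYp.ne', Real.log_mul (by positivity) haXp.ne'] at hlog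
  rw [Real.log_div (by positivity) h1p.ne', Real.log_div (by positivity) h1p.ne']
  have e1 : σ * Real.log aX = t - μX := by rw [haX, Real.log_exp]; field_simp
  have e2 : σ * Real.log aY = t - μY := by rw [haY, Real.log_exp]; field_simp
  have h5 : σ * (Real.log (p + aX) + Real.log aY) ≤ σ * (Real.log (p + aY) + Real.log aX) :=
    mul_le_mul_of_nonneg_left hlog hσ.le
  nlinarith [h5, e1, e2]

lemma scale_pt {μ σX σY t p : ℝ} (hσX : 0 < σX) (hσ : σX ≤ σY) (ht : μ ≤ t)
    (hp0 : 0 < p) (hp1 : p < 1) :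
    σX * Real.log ((p + Real.exp ((t - μ) / σX)) / (1 - p)) + μ - t
      ≤ σY * Real.log ((p + Real.exp ((t - μ) / σY)) / (1 - p)) + μ - t := by
  have hσY : 0 < σY := hσX.trans_le hσ
  have h1p : 0 < 1 - p := by linarith
  set s := t - μ with hs
  have hs0 : 0 ≤ s := by simp [hs]; linarith
  have key : ∀ c : ℝ, Real.log (p + Real.exp c) = c + Real.log (1 + p * Real.exp (-c)) := by
    intro c
    have h1 : p + Real.exp c = Real.exp c * (1 + p * Real.exp (-c)) := by
      rw [Real.exp_neg]; field_simp; ring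
    rw [h1, Real.log_mul (Real.exp_ne_zero c) (by positivity), Real.log_exp]
  rw [Real.log_div (by positivity) h1p.ne', Real.log_div (by positivity) h1p.ne',
    key (s / σX), key (s / σY)]
  set LX := Real.log (1 + p * Real.exp (-(s / σX))) with hLX
  set LY := Real.log (1 + p * Real.exp (-(s / σY))) with hLY
  have hdiv : s / σY ≤ s / σX := by gcongr
  have hLX0 : 0 ≤ LX := Real.log_nonneg (by nlinarith [Real.exp_pos (-(s / σX))])
  have hLXY : LX ≤ LY := by
    apply Real.log_le_log (by positivity)
    have : Real.exp (-(s / σX)) ≤ Real.exp (-(s / σY)) := Real.exp_le_exp.2 (by linarith)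
    nlinarith
  have hmm : σX * LX ≤ σY * LY := mul_le_mul hσ hLXY hLX0 hσY.le
  have hlog1p : Real.log (1 - p) ≤ 0 := Real.log_nonpos (by linarith) (by linarith)
  have hneg : σY * Real.log (1 - p) ≤ σX * Real.log (1 - p) :=
    mul_le_mul_of_nonpos_right hσ hlog1p
  have eX : σX * (s / σX + LX - Real.log (1 - p)) = s + σX * LX - σX * Real.log (1 - p) := by
    field_simp
  have eY : σY * (s / σY + LY - Real.log (1 - p)) = s + σY * LY - σY * Real.log (1 - p) := by
    field_simp
  rw [eX, eY]
  linarith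

/-- Interval integrability of the residual-life quantile of a logistic distribution
on `[p, 1]` for `0 < p < 1`. -/
lemma II_resQ {μ σ t p : ℝ} (hσ : 0 < σ) (hp0 : 0 < p) (hp1 : p < 1) :
    IntervalIntegrable (resQuantile (logisticCDF μ σ) t) volume p 1 := by
  set a := Real.exp ((t - μ) / σ) with ha_def
  have ha : 0 < a := Real.exp_pos _
  set g : ℝ → ℝ := fun u => σ * Real.log (u + a) - σ * Real.log (1 - u) + (μ - t) with hg_def
  have hg : IntervalIntegrable g volume p 1 := by
    have h1 : IntervalIntegrable (fun u : ℝ => σ * Real.log (u + a)) volume p 1 := by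
      apply ContinuousOn.intervalIntegrable
      apply continuousOn_const.mul
      apply ContinuousOn.log ((continuousOn_id.add continuousOn_const))
      intro x hx
      rw [Set.uIcc_of_le hp1.le] at hx
      have : 0 < x + a := by linarith [hx.1]
      exact this.ne'
    have h2 : IntervalIntegrable (fun u : ℝ => σ * Real.log (1 - u)) volume p 1 :=
      (II_log_one_sub_aux hp0.le hp1.le).const_mul σ
    exact (h1.sub h2).add intervalIntegrable_const
  rw [intervalIntegrable_iff_integrableOn_Ioc_of_le hp1.le]
  have hg' : IntegrableOn g (Ioc p 1) volume :=
    (intervalIntegrable_iff_integrableOn_Ioc_of_le hp1.le).1 hg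
  apply hg'.congr
  rw [Filter.EventuallyEq, ae_restrict_iff' measurableSet_Ioc]
  rw [MeasureTheory.ae_iff]
  refine measure_mono_null ?_ (measure_singleton (1:ℝ))
  intro x hx
  simp only [Set.mem_setOf_eq, Classical.not_imp, Set.mem_Ioc] at hx
  obtain ⟨⟨hxp, hx1⟩, hne⟩ := hx
  rw [Set.mem_singleton_iff]
  by_contra hx1'
  apply hne
  have hxlt : x < 1 := lt_of_le_of_ne hx1 hx1'
  have hx0 : 0 < x := hp0.trans hxp
  rw [resQ_logistic hσ hx0 hxlt, hg_def]
  have h1x : (0:ℝ) < 1 - x := by linarith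
  rw [Real.log_div (by positivity) h1x.ne']
  ring

end Aux

/-- For logistic random variables with common scale `σ > 0` and `μ_X < μ_Y`: the residual life
quantile functions, given by `F_t^{-1}(p) = σ log[(p + e^{(t-μ_X)/σ})/(1-p)] + μ_X - t` and
analogously for `Y`, satisfy `F_t^{-1}(p) ≤ G_t^{-1}(p)` for all `p ∈ (0,1)` and all `t ∈ ℝ`
(so `X ≤_{hr} Y`), and hence `X ≤_{p₀-tvar-rl} Y` for every `p₀ ∈ (0,1)`. Moreover, if instead
`μ_X = μ_Y = μ` and `0 < σ_X ≤ σ_Y`, then `F_t^{-1}(p) ≤ G_t^{-1}(p)` for all `t ≥ μ` and all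
`p ∈ (0,1)`. -/
theorem stmt19 :
    (∀ μX μY σ : ℝ, 0 < σ → μX < μY →
      (∀ t : ℝ, ∀ p ∈ Set.Ioo (0 : ℝ) 1,
        resQuantile (logisticCDF μX σ) t p
          = σ * Real.log ((p + Real.exp ((t - μX) / σ)) / (1 - p)) + μX - t ∧
        resQuantile (logisticCDF μY σ) t p
          = σ * Real.log ((p + Real.exp ((t - μY) / σ)) / (1 - p)) + μY - t ∧
        resQuantile (logisticCDF μX σ) t p ≤ resQuantile (logisticCDF μY σ) t p) ∧
      ∀ p₀ ∈ Set.Ioo (0 : ℝ) 1, TvarRlLE (logisticCDF μX σ) (logisticCDF μY σ) p₀) ∧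
    (∀ μ σX σY : ℝ, 0 < σX → σX ≤ σY → ∀ t : ℝ, μ ≤ t → ∀ p ∈ Set.Ioo (0 : ℝ) 1,
      resQuantile (logisticCDF μ σX) t p ≤ resQuantile (logisticCDF μ σY) t p) := by
  constructor
  · intro μX μY σ hσ hμ
    have hpt : ∀ t : ℝ, ∀ p ∈ Set.Ioo (0 : ℝ) 1,
        resQuantile (logisticCDF μX σ) t p
          = σ * Real.log ((p + Real.exp ((t - μX) / σ)) / (1 - p)) + μX - t ∧
        resQuantile (logisticCDF μY σ) t p
          = σ * Real.log ((p + Real.exp ((t - μY) / σ)) / (1 - p)) + μY - t ∧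
        resQuantile (logisticCDF μX σ) t p ≤ resQuantile (logisticCDF μY σ) t p := by
      intro t p hp
      obtain ⟨hp0, hp1⟩ := hp
      refine ⟨resQ_logistic hσ hp0 hp1, resQ_logistic hσ hp0 hp1, ?_⟩
      rw [resQ_logistic hσ hp0 hp1, resQ_logistic hσ hp0 hp1]
      exact hr_pt hσ hμ hp0 hp1
    refine ⟨hpt, ?_⟩
    intro p₀ hp₀ t _ _ p hp
    obtain ⟨hp₀p, hp1⟩ := hp
    have hp0 : 0 < p := hp₀.1.trans_le hp₀p
    have hX := II_resQ (μ := μX) (σ := σ) (t := t) hσ hp0 hp1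
    have hY := II_resQ (μ := μY) (σ := σ) (t := t) hσ hp0 hp1
    apply intervalIntegral.integral_mono_ae_restrict hp1.le hX hY
    rw [Filter.EventuallyLE, ae_restrict_iff' measurableSet_Icc, MeasureTheory.ae_iff]
    refine measure_mono_null ?_ (measure_singleton (1:ℝ))
    intro x hx
    simp only [Set.mem_setOf_eq, Classical.not_imp, Set.mem_Icc] at hx
    obtain ⟨⟨hxp, hx1⟩, hne⟩ := hx
    rw [Set.mem_singleton_iff]
    by_contra hx1'
    exact hne ((hpt t x ⟨hp0.trans_le hxp, lt_of_le_of_ne hx1 hx1'⟩).2.2)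
  · intro μ σX σY hσX hσ t ht p hp
    obtain ⟨hp0, hp1⟩ := hp
    have hσY : 0 < σY := hσX.trans_le hσ
    rw [resQ_logistic hσX hp0 hp1, resQ_logistic hσY hp0 hp1]
    exact scale_pt hσX hσ ht hp0 hp1
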